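/- (Vacancy chains, extra seat) Let I be a Hospitals/Residents instance with strict preferences and let I' be obtained from I by increasing the upper quota of a single company by one (all other data unchanged). Let S be the set of matched applicants in a stable matching of I and S' the set of matched applicants in a stable matching of I'. Then either S' = S, or S' = S ∪ {b} for some applicant b ∉ S. -/

import Mathlib

open Finset

variable {A C : Type*} [Fintype A] [DecidableEq A] [Fintype C] [DecidableEq C]

/-- `M` is a matching w.r.t. the acceptable pairs `E` and the upper quotas `u`. -/
def IsMatching (E : Finset (A × C)) (u : C → ℕ) (M : Finset (A × C)) : Prop :=
  M ⊆ E ∧ (∀ a : A, (M.filter (fun p => p.1 = a)).card ≤ 1) ∧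
    ∀ c : C, (M.filter (fun p => p.2 = c)).card ≤ u c

/-- `(a, c) ∈ E \ M` blocks `M`. -/
def Blocks (E : Finset (A × C)) (u : C → ℕ) (pref : A → C → ℕ) (s : A → C → ℤ)
    (M : Finset (A × C)) (a : A) (c : C) : Prop :=
  (a, c) ∈ E ∧ (a, c) ∉ M ∧ (∀ c', (a, c') ∈ M → pref a c < pref a c') ∧
    ((M.filter (fun p => p.2 = c)).card < u c ∨ ∃ h : A, (h, c) ∈ M ∧ s h c < s a c)

/-- `M` is stable: no pair blocks it. -/
def Stable (E : Finset (A × C)) (u : C → ℕ) (pref : A → C → ℕ) (s : A → C → ℤ)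
    (M : Finset (A × C)) : Prop :=
  ∀ (a : A) (c : C), ¬ Blocks E u pref s M a c

/-- In a matching, each applicant has a unique partner. -/
lemma partner_unique {M : Finset (A × C)}
    (h : ∀ a : A, (M.filter (fun p => p.1 = a)).card ≤ 1)
    {a : A} {c c' : C} (h1 : (a, c) ∈ M) (h2 : (a, c') ∈ M) : c = c' := by
  have := Finset.card_le_one.mp (h a) (a, c) (by simp [Finset.mem_filter, h1])
    (a, c') (by simp [Finset.mem_filter, h2])
  exact congrArg Prod.snd this

/-- Key stability consequence: if `(a,c) ∈ M` and `a` prefers `c` to anything `M'`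
gives her, then `c` is full in `M'` and all its `M'`-assignees beat `a`. -/
lemma stable_full {E : Finset (A × C)} {u' : C → ℕ} {pref : A → C → ℕ} {s : A → C → ℤ}
    {M' : Finset (A × C)}
    (hcompStrict : ∀ c x y, (x, c) ∈ E → (y, c) ∈ E → s x c = s y c → x = y)
    (hM'E : M' ⊆ E) (hM'stable : Stable E u' pref s M')
    {a : A} {c : C} (haE : (a, c) ∈ E)
    (hcond : ∀ c', (a, c') ∈ M' → pref a c < pref a c') :
    (a, c) ∉ M' ∧ u' c ≤ (M'.filter (fun q => q.2 = c)).card ∧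
      ∀ h : A, (h, c) ∈ M' → s a c < s h c := by
  have hnM' : (a, c) ∉ M' := fun h => lt_irrefl _ (hcond c h)
  have hnb := hM'stable a c
  rw [Blocks] at hnb
  push_neg at hnb
  have h2 := hnb haE hnM' hcond
  refine ⟨hnM', h2.1, fun h hh => ?_⟩
  rcases lt_or_eq_of_le (h2.2 h hh) with h3 | h3
  · exact h3
  · have hah : a = h := hcompStrict c a h haE (hM'E hh) h3
    rw [← hah] at hh
    exact absurd hh hnM'

section CountA

/-- If quotas only increase, every applicant matched in a stable matching for the
smaller quotas is matched in every stable matching for the larger quotas. -/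
lemma matched_subset
    (E : Finset (A × C)) (u u' : C → ℕ) (pref : A → C → ℕ) (s : A → C → ℤ)
    (hprefStrict : ∀ x c c', (x, c) ∈ E → (x, c') ∈ E → pref x c = pref x c' → c = c')
    (hcompStrict : ∀ c x y, (x, c) ∈ E → (y, c) ∈ E → s x c = s y c → x = y)
    (huu' : ∀ c, u c ≤ u' c)
    (M M' : Finset (A × C))
    (hM : IsMatching E u M) (hMstable : Stable E u pref s M)
    (hM' : IsMatching E u' M') (hM'stable : Stable E u' pref s M') :
    M.image Prod.fst ⊆ M'.image Prod.fst := by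
  classical
  obtain ⟨hME, hMa, hMc⟩ := hM
  obtain ⟨hM'E, hM'a, hM'c⟩ := hM'
  set B := M.filter (fun p => ∀ c', (p.1, c') ∈ M' → pref p.1 p.2 < pref p.1 c') with hBdef
  have hKey : ∀ p ∈ B, (p.1, p.2) ∉ M' ∧ u' p.2 ≤ (M'.filter (fun q => q.2 = p.2)).card ∧
      ∀ h : A, (h, p.2) ∈ M' → s p.1 p.2 < s h p.2 := by
    intro p hp
    rw [hBdef, mem_filter] at hp
    exact stable_full hcompStrict hM'E hM'stable (hME hp.1) hp.2
  set 𝔠 := B.image Prod.snd with h𝔠def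
  set D := (M \ M').filter (fun p => p.2 ∈ 𝔠) with hDdef
  set D' := (M' \ M).filter (fun p => p.2 ∈ 𝔠) with hD'def
  -- every pair of `D'` has an applicant matched in `M` to a strictly better company
  have hL3 : ∀ p ∈ D', ∃ c'' : C, (p.1, c'') ∈ M ∧ pref p.1 c'' < pref p.1 p.2 := by
    intro p hp
    rw [hD'def, mem_filter, mem_sdiff] at hp
    obtain ⟨⟨hpM', hpM⟩, hp𝔠⟩ := hp
    obtain ⟨q, hqB, hq2⟩ := mem_image.mp hp𝔠
    have hqB' : (q.1, p.2) ∈ B := by rw [← hq2]; exact hqB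
    have hkey := hKey (q.1, p.2) hqB'
    have hsq : s q.1 p.2 < s p.1 p.2 := hkey.2.2 p.1 hpM'
    have hq1M : (q.1, p.2) ∈ M := by
      rw [hBdef, mem_filter] at hqB'; exact hqB'.1
    by_contra hno
    push_neg at hno
    refine hMstable p.1 p.2 ⟨hM'E hpM', hpM, ?_, Or.inr ⟨q.1, hq1M, hsq⟩⟩
    intro c' hc'
    rcases lt_or_eq_of_le (hno c' hc') with h | h
    · exact h
    · have : p.2 = c' := hprefStrict p.1 p.2 c' (hM'E hpM') (hME hc') h
      rw [← this] at hc'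
      exact absurd hc' hpM
  set ψ : A × C → A × C := fun p =>
    (p.1, if h : ∃ c'' : C, (p.1, c'') ∈ M ∧ pref p.1 c'' < pref p.1 p.2
      then h.choose else p.2) with hψdef
  have hψfst : ∀ p : A × C, (ψ p).1 = p.1 := fun _ => rfl
  have hψB : ∀ p ∈ D', ψ p ∈ B := by
    intro p hp
    have hex : ∃ c'' : C, (p.1, c'') ∈ M ∧ pref p.1 c'' < pref p.1 p.2 := hL3 p hp
    have hψp : ψ p = (p.1, hex.choose) := by rw [hψdef]; simp only [dif_pos hex]
    rw [hψp, hBdef, mem_filter]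
    obtain ⟨h1, h2⟩ := hex.choose_spec
    refine ⟨h1, fun d hd => ?_⟩
    have hpM' : (p.1, p.2) ∈ M' := (mem_sdiff.mp (mem_filter.mp hp).1).1
    have hdp : d = p.2 := partner_unique hM'a hd hpM'
    rw [hdp]; exact h2
  have hψinj : Set.InjOn ψ ↑D' := by
    intro p hp q hq heq
    have hp' : p ∈ D' := hp
    have hq' : q ∈ D' := hq
    have hpM' : (p.1, p.2) ∈ M' := (mem_sdiff.mp (mem_filter.mp hp').1).1
    have hqM' : (q.1, q.2) ∈ M' := (mem_sdiff.mp (mem_filter.mp hq').1).1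
    have h1 : p.1 = q.1 := by rw [← hψfst p, ← hψfst q, heq]
    have hqM'' : (p.1, q.2) ∈ M' := by rw [h1]; exact hqM'
    have h2 : p.2 = q.2 := partner_unique hM'a hpM' hqM''
    exact Prod.ext h1 h2
  have hBD : B ⊆ D := by
    intro p hp
    have hp1 : p ∈ M := by rw [hBdef, mem_filter] at hp; exact hp.1
    rw [hDdef, mem_filter, mem_sdiff]
    exact ⟨⟨hp1, (hKey p hp).1⟩, mem_image_of_mem Prod.snd hp⟩
  -- fiberwise counting: |D| ≤ |D'|
  have hfib : ∀ (X : Finset (A × C)),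
      ((X).filter (fun p => p.2 ∈ 𝔠)).card
        = ∑ c ∈ 𝔠, (X.filter (fun p => p.2 = c)).card := by
    intro X
    rw [Finset.card_eq_sum_card_fiberwise (f := Prod.snd) (s := X.filter (fun p => p.2 ∈ 𝔠))
      (t := 𝔠) (fun p hp => (mem_filter.mp hp).2)]
    refine Finset.sum_congr rfl (fun c hc => ?_)
    congr 1
    ext p
    simp only [mem_filter]
    constructor
    · rintro ⟨⟨h1, _⟩, h2⟩; exact ⟨h1, h2⟩
    · rintro ⟨h1, h2⟩; exact ⟨⟨h1, h2 ▸ hc⟩, h2⟩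
  have hper : ∀ c ∈ 𝔠, ((M \ M').filter (fun p => p.2 = c)).card
      ≤ ((M' \ M).filter (fun p => p.2 = c)).card := by
    intro c hc
    obtain ⟨q, hqB, hq2⟩ := mem_image.mp hc
    have hqB' : (q.1, c) ∈ B := by rw [← hq2]; exact hqB
    have hfull : u' c ≤ (M'.filter (fun p => p.2 = c)).card := (hKey (q.1, c) hqB').2.1
    have e1 : ((M \ M').filter (fun p => p.2 = c))
        = (M.filter (fun p => p.2 = c)) \ (M'.filter (fun p => p.2 = c)) := by
      ext p; simp only [mem_filter, mem_sdiff]; tauto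
    have e2 : ((M' \ M).filter (fun p => p.2 = c))
        = (M'.filter (fun p => p.2 = c)) \ (M.filter (fun p => p.2 = c)) := by
      ext p; simp only [mem_filter, mem_sdiff]; tauto
    rw [e1, e2]
    have i1 := Finset.card_sdiff_add_card_inter
      (M.filter (fun p => p.2 = c)) (M'.filter (fun p => p.2 = c))
    have i2 := Finset.card_sdiff_add_card_inter
      (M'.filter (fun p => p.2 = c)) (M.filter (fun p => p.2 = c))
    have i3 : (M.filter (fun p => p.2 = c) ∩ M'.filter (fun p => p.2 = c)).card
        = (M'.filter (fun p => p.2 = c) ∩ M.filter (fun p => p.2 = c)).card := by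
      rw [Finset.inter_comm]
    have i4 : (M.filter (fun p => p.2 = c)).card ≤ u c := hMc c
    have i5 := huu' c
    omega
  have hDcard : D.card ≤ D'.card := by
    rw [hDdef, hD'def, hfib (M \ M'), hfib (M' \ M)]
    exact Finset.sum_le_sum hper
  have hD'B : D'.card ≤ B.card := Finset.card_le_card_of_injOn ψ hψB hψinj
  have hBcard : B.card ≤ D.card := Finset.card_le_card hBD
  have himg : D'.image ψ = B := by
    apply Finset.eq_of_subset_of_card_le
    · intro x hx
      obtain ⟨p, hp, rfl⟩ := mem_image.mp hx
      exact hψB p hp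
    · rw [Finset.card_image_of_injOn hψinj]; omega
  intro a ha
  obtain ⟨p, hpM, rfl⟩ := mem_image.mp ha
  by_contra haM'
  have hno : ∀ d, (p.1, d) ∉ M' := fun d hd => haM' (mem_image.mpr ⟨(p.1, d), hd, rfl⟩)
  have hpB : p ∈ B := by
    rw [hBdef, mem_filter]
    exact ⟨hpM, fun c' hc' => absurd hc' (hno c')⟩
  rw [← himg] at hpB
  obtain ⟨q, hqD', hq⟩ := mem_image.mp hpB
  have hqM' : (q.1, q.2) ∈ M' := (mem_sdiff.mp (mem_filter.mp hqD').1).1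
  have hq1 : q.1 = p.1 := by rw [← hψfst q, hq]
  rw [hq1] at hqM'
  exact hno q.2 hqM'

end CountA

section CountB

/-- If quotas increase by at most one total unit (at `c₀`), at most one new applicant
gets matched. -/
lemma new_matched_le_one
    (E : Finset (A × C)) (u u' : C → ℕ) (pref : A → C → ℕ) (s : A → C → ℤ) (c₀ : C)
    (hprefStrict : ∀ x c c', (x, c) ∈ E → (x, c') ∈ E → pref x c = pref x c' → c = c')
    (hcompStrict : ∀ c x y, (x, c) ∈ E → (y, c) ∈ E → s x c = s y c → x = y)
    (hu' : ∀ c, u' c ≤ u c + (if c = c₀ then 1 else 0))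
    (M M' : Finset (A × C))
    (hM : IsMatching E u M) (hMstable : Stable E u pref s M)
    (hM' : IsMatching E u' M') (hM'stable : Stable E u' pref s M') :
    ((M'.image Prod.fst) \ (M.image Prod.fst)).card ≤ 1 := by
  classical
  obtain ⟨hME, hMa, hMc⟩ := hM
  obtain ⟨hM'E, hM'a, hM'c⟩ := hM'
  set B := M'.filter (fun p => ∀ c', (p.1, c') ∈ M → pref p.1 p.2 < pref p.1 c') with hBdef
  have hKey : ∀ p ∈ B, (p.1, p.2) ∉ M ∧ u p.2 ≤ (M.filter (fun q => q.2 = p.2)).card ∧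
      ∀ h : A, (h, p.2) ∈ M → s p.1 p.2 < s h p.2 := by
    intro p hp
    rw [hBdef, mem_filter] at hp
    exact stable_full hcompStrict hME hMstable (hM'E hp.1) hp.2
  set 𝔠 := B.image Prod.snd with h𝔠def
  set D := (M \ M').filter (fun p => p.2 ∈ 𝔠) with hDdef
  set D' := (M' \ M).filter (fun p => p.2 ∈ 𝔠) with hD'def
  have hL3 : ∀ p ∈ D, ∃ c'' : C, (p.1, c'') ∈ M' ∧ pref p.1 c'' < pref p.1 p.2 := by
    intro p hp
    rw [hDdef, mem_filter, mem_sdiff] at hp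
    obtain ⟨⟨hpM, hpM'⟩, hp𝔠⟩ := hp
    obtain ⟨q, hqB, hq2⟩ := mem_image.mp hp𝔠
    have hqB' : (q.1, p.2) ∈ B := by rw [← hq2]; exact hqB
    have hkey := hKey (q.1, p.2) hqB'
    have hsq : s q.1 p.2 < s p.1 p.2 := hkey.2.2 p.1 hpM
    have hq1M' : (q.1, p.2) ∈ M' := by
      rw [hBdef, mem_filter] at hqB'; exact hqB'.1
    by_contra hno
    push_neg at hno
    refine hM'stable p.1 p.2 ⟨hME hpM, hpM', ?_, Or.inr ⟨q.1, hq1M', hsq⟩⟩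
    intro c' hc'
    rcases lt_or_eq_of_le (hno c' hc') with h | h
    · exact h
    · have : p.2 = c' := hprefStrict p.1 p.2 c' (hME hpM) (hM'E hc') h
      rw [← this] at hc'
      exact absurd hc' hpM'
  set ψ : A × C → A × C := fun p =>
    (p.1, if h : ∃ c'' : C, (p.1, c'') ∈ M' ∧ pref p.1 c'' < pref p.1 p.2
      then h.choose else p.2) with hψdef
  have hψfst : ∀ p : A × C, (ψ p).1 = p.1 := fun _ => rfl
  set Bm := B.filter (fun q => ∃ d : C, (q.1, d) ∈ M) with hBmdef
  have hψB : ∀ p ∈ D, ψ p ∈ Bm := by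
    intro p hp
    have hex : ∃ c'' : C, (p.1, c'') ∈ M' ∧ pref p.1 c'' < pref p.1 p.2 := hL3 p hp
    have hψp : ψ p = (p.1, hex.choose) := by rw [hψdef]; simp only [dif_pos hex]
    have hpM : (p.1, p.2) ∈ M := (mem_sdiff.mp (mem_filter.mp hp).1).1
    rw [hψp, hBmdef, mem_filter, hBdef, mem_filter]
    obtain ⟨h1, h2⟩ := hex.choose_spec
    refine ⟨⟨h1, fun d hd => ?_⟩, ⟨p.2, hpM⟩⟩
    have hdp : d = p.2 := partner_unique hMa hd hpM
    rw [hdp]; exact h2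
  have hψinj : Set.InjOn ψ ↑D := by
    intro p hp q hq heq
    have hp' : p ∈ D := hp
    have hq' : q ∈ D := hq
    have hpM : (p.1, p.2) ∈ M := (mem_sdiff.mp (mem_filter.mp hp').1).1
    have hqM : (q.1, q.2) ∈ M := (mem_sdiff.mp (mem_filter.mp hq').1).1
    have h1 : p.1 = q.1 := by rw [← hψfst p, ← hψfst q, heq]
    have hqM'' : (p.1, q.2) ∈ M := by rw [h1]; exact hqM
    have h2 : p.2 = q.2 := partner_unique hMa hpM hqM''
    exact Prod.ext h1 h2
  have hBD' : B ⊆ D' := by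
    intro p hp
    have hp1 : p ∈ M' := by rw [hBdef, mem_filter] at hp; exact hp.1
    rw [hD'def, mem_filter, mem_sdiff]
    exact ⟨⟨hp1, (hKey p hp).1⟩, mem_image_of_mem Prod.snd hp⟩
  have hfib : ∀ (X : Finset (A × C)),
      ((X).filter (fun p => p.2 ∈ 𝔠)).card
        = ∑ c ∈ 𝔠, (X.filter (fun p => p.2 = c)).card := by
    intro X
    rw [Finset.card_eq_sum_card_fiberwise (f := Prod.snd) (s := X.filter (fun p => p.2 ∈ 𝔠))
      (t := 𝔠) (fun p hp => (mem_filter.mp hp).2)]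
    refine Finset.sum_congr rfl (fun c hc => ?_)
    congr 1
    ext p
    simp only [mem_filter]
    constructor
    · rintro ⟨⟨h1, _⟩, h2⟩; exact ⟨h1, h2⟩
    · rintro ⟨h1, h2⟩; exact ⟨⟨h1, h2 ▸ hc⟩, h2⟩
  have hper : ∀ c ∈ 𝔠, ((M' \ M).filter (fun p => p.2 = c)).card
      ≤ ((M \ M').filter (fun p => p.2 = c)).card + (if c = c₀ then 1 else 0) := by
    intro c hc
    obtain ⟨q, hqB, hq2⟩ := mem_image.mp hc
    have hqB' : (q.1, c) ∈ B := by rw [← hq2]; exact hqB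
    have hfull : u c ≤ (M.filter (fun p => p.2 = c)).card := (hKey (q.1, c) hqB').2.1
    have e1 : ((M \ M').filter (fun p => p.2 = c))
        = (M.filter (fun p => p.2 = c)) \ (M'.filter (fun p => p.2 = c)) := by
      ext p; simp only [mem_filter, mem_sdiff]; tauto
    have e2 : ((M' \ M).filter (fun p => p.2 = c))
        = (M'.filter (fun p => p.2 = c)) \ (M.filter (fun p => p.2 = c)) := by
      ext p; simp only [mem_filter, mem_sdiff]; tauto
    rw [e1, e2]
    have i1 := Finset.card_sdiff_add_card_inter
      (M.filter (fun p => p.2 = c)) (M'.filter (fun p => p.2 = c))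
    have i2 := Finset.card_sdiff_add_card_inter
      (M'.filter (fun p => p.2 = c)) (M.filter (fun p => p.2 = c))
    have i3 : (M.filter (fun p => p.2 = c) ∩ M'.filter (fun p => p.2 = c)).card
        = (M'.filter (fun p => p.2 = c) ∩ M.filter (fun p => p.2 = c)).card := by
      rw [Finset.inter_comm]
    have i4 : (M'.filter (fun p => p.2 = c)).card ≤ u' c := hM'c c
    have i5 := hu' c
    have i6 : (M.filter (fun p => p.2 = c)).card ≤ u c := hMc c
    by_cases h : c = c₀
    · subst h
      simp only [if_pos rfl] at i5 ⊢
      omega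
    · simp only [if_neg h] at i5 ⊢
      omega
  have hD'card : D'.card ≤ D.card + 1 := by
    rw [hDdef, hD'def, hfib (M \ M'), hfib (M' \ M)]
    calc ∑ c ∈ 𝔠, ((M' \ M).filter (fun p => p.2 = c)).card
        ≤ ∑ c ∈ 𝔠, (((M \ M').filter (fun p => p.2 = c)).card
            + (if c = c₀ then 1 else 0)) := Finset.sum_le_sum hper
      _ = (∑ c ∈ 𝔠, ((M \ M').filter (fun p => p.2 = c)).card)
            + ∑ c ∈ 𝔠, (if c = c₀ then 1 else 0) := Finset.sum_add_distrib
      _ ≤ (∑ c ∈ 𝔠, ((M \ M').filter (fun p => p.2 = c)).card) + 1 := by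
          gcongr
          rw [Finset.sum_ite_eq' 𝔠 c₀ (fun _ => 1)]
          split <;> simp
  have hDBm : D.card ≤ Bm.card := Finset.card_le_card_of_injOn ψ hψB hψinj
  have hBcard : B.card ≤ D'.card := Finset.card_le_card hBD'
  -- so the unmatched-in-M part of B has at most one element
  set Bu := B.filter (fun q => ¬ ∃ d : C, (q.1, d) ∈ M) with hBudef
  have hsplit : Bm.card + Bu.card = B.card := by
    rw [hBmdef, hBudef]
    exact Finset.card_filter_add_card_filter_not _
  have hBu1 : Bu.card ≤ 1 := by omega
  -- now inject the newly matched applicants into Bu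
  set φ : A → A × C := fun a =>
    (a, if h : ∃ d : C, (a, d) ∈ M' then h.choose else c₀) with hφdef
  have hφBu : ∀ a ∈ (M'.image Prod.fst) \ (M.image Prod.fst), φ a ∈ Bu := by
    intro a ha
    rw [mem_sdiff] at ha
    obtain ⟨haM', haM⟩ := ha
    obtain ⟨p, hpM', hp1⟩ := mem_image.mp haM'
    have hex : ∃ d : C, (a, d) ∈ M' := ⟨p.2, by rw [← hp1]; exact hpM'⟩
    have hnoM : ∀ d : C, (a, d) ∉ M := by
      intro d hd
      exact haM (mem_image_of_mem Prod.fst hd)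
    have hφa : φ a = (a, hex.choose) := by rw [hφdef]; simp only [dif_pos hex]
    rw [hφa, hBudef, mem_filter, hBdef, mem_filter]
    refine ⟨⟨hex.choose_spec, fun c' hc' => absurd hc' (hnoM c')⟩, ?_⟩
    simp only [not_exists]
    exact hnoM
  have hφfst : ∀ a : A, (φ a).1 = a := fun _ => rfl
  have hφinj : Set.InjOn φ ↑((M'.image Prod.fst) \ (M.image Prod.fst)) := by
    intro a _ b _ heq
    rw [← hφfst a, ← hφfst b, heq]
  calc ((M'.image Prod.fst) \ (M.image Prod.fst)).card
      ≤ Bu.card := Finset.card_le_card_of_injOn φ hφBu hφinj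
    _ ≤ 1 := hBu1

end CountB

theorem vacancy_chain_extra_seat
    (E : Finset (A × C)) (u : C → ℕ) (pref : A → C → ℕ) (s : A → C → ℤ) (c₀ : C)
    (hprefStrict : ∀ x c c', (x, c) ∈ E → (x, c') ∈ E → pref x c = pref x c' → c = c')
    (hcompStrict : ∀ c x y, (x, c) ∈ E → (y, c) ∈ E → s x c = s y c → x = y)
    (M M' : Finset (A × C))
    (hM : IsMatching E u M) (hMstable : Stable E u pref s M)
    (hM' : IsMatching E (Function.update u c₀ (u c₀ + 1)) M')
    (hM'stable : Stable E (Function.update u c₀ (u c₀ + 1)) pref s M')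
    (S S' : Finset A)
    (hS : S = M.image Prod.fst) (hS' : S' = M'.image Prod.fst) :
    S' = S ∨ ∃ b : A, b ∉ S ∧ S' = insert b S := by
  classical
  have huu' : ∀ c, u c ≤ Function.update u c₀ (u c₀ + 1) c := by
    intro c
    by_cases h : c = c₀
    · subst h; simp
    · rw [Function.update_of_ne h]
  have hu' : ∀ c, Function.update u c₀ (u c₀ + 1) c ≤ u c + (if c = c₀ then 1 else 0) := by
    intro c
    by_cases h : c = c₀
    · subst h; simp
    · rw [Function.update_of_ne h]; simp [h]
  have hsub : S ⊆ S' := by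
    rw [hS, hS']
    exact matched_subset E u _ pref s hprefStrict hcompStrict huu' M M'
      hM hMstable hM' hM'stable
  have hcard : (S' \ S).card ≤ 1 := by
    rw [hS, hS']
    exact new_matched_le_one E u _ pref s c₀ hprefStrict hcompStrict hu' M M'
      hM hMstable hM' hM'stable
  have hunion : S ∪ (S' \ S) = S' := by
    rw [Finset.union_sdiff_of_subset hsub]
  interval_cases h : (S' \ S).card
  · left
    have : S' \ S = ∅ := Finset.card_eq_zero.mp h
    rw [← hunion, this, Finset.union_empty]
  · right
    obtain ⟨b, hb⟩ := Finset.card_eq_one.mp h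
    refine ⟨b, ?_, ?_⟩
    · have : b ∈ S' \ S := by rw [hb]; exact Finset.mem_singleton_self b
      exact (Finset.mem_sdiff.mp this).2
    · rw [← hunion, hb, Finset.union_comm, ← Finset.insert_eq]
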